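/- Let 𝕜 be a field and let B be an N×N matrix over 𝕜 that is strictly upper triangular and satisfies B * B = 0. Then there exists an invertible upper triangular N×N matrix U over 𝕜 such that U⁻¹ * B * U is strictly upper triangular and in partial-matching form. (This is the matrix form of the existence part of the structure theorem for persistent homology of a finite filtration, Fact 2 in the paper's appendix: after a filtration-preserving change of basis, the boundary operator pairs each chain σ̃_j with ∂σ̃_j = σ̃_{L(j)} or kills it.) -/
import Mathlib


/-- A matrix is strictly upper triangular if `C i j = 0` whenever `i ≥ j`. -/
def IsStrictlyUpperTriangular {𝕜 : Type*} [Field 𝕜] {N : ℕ}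
    (C : Matrix (Fin N) (Fin N) 𝕜) : Prop :=
  ∀ i j, j ≤ i → C i j = 0

/-- A matrix is upper triangular if `U i j = 0` whenever `i > j`. -/
def IsUpperTriangularMat {𝕜 : Type*} [Field 𝕜] {N : ℕ}
    (U : Matrix (Fin N) (Fin N) 𝕜) : Prop :=
  ∀ i j, j < i → U i j = 0

/-- A matrix is in partial-matching form if every entry is `0` or `1` and each row and
each column contains at most one nonzero entry. -/
def IsPartialMatching {𝕜 : Type*} [Field 𝕜] {N : ℕ}
    (C : Matrix (Fin N) (Fin N) 𝕜) : Prop :=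
  (∀ i j, C i j = 0 ∨ C i j = 1) ∧
  (∀ i j₁ j₂, C i j₁ ≠ 0 → C i j₂ ≠ 0 → j₁ = j₂) ∧
  (∀ i₁ i₂ j, C i₁ j ≠ 0 → C i₂ j ≠ 0 → i₁ = i₂)

open Matrix Finset

section Helpers

variable {𝕜 : Type*} [Field 𝕜] {N : ℕ}

private def ext1 (M : Matrix (Fin N) (Fin N) 𝕜) (col : Fin N → 𝕜) (s : 𝕜) :
    Matrix (Fin (N + 1)) (Fin (N + 1)) 𝕜 :=
  Matrix.of fun i j =>
    Fin.lastCases (Fin.lastCases s col i) (fun j' => Fin.lastCases 0 (fun i' => M i' j') i) j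

@[simp] private lemma ext1_cc (M : Matrix (Fin N) (Fin N) 𝕜) (col : Fin N → 𝕜) (s : 𝕜)
    (i j : Fin N) : ext1 M col s i.castSucc j.castSucc = M i j := by
  simp [ext1]

@[simp] private lemma ext1_cl (M : Matrix (Fin N) (Fin N) 𝕜) (col : Fin N → 𝕜) (s : 𝕜)
    (i : Fin N) : ext1 M col s i.castSucc (Fin.last N) = col i := by
  simp [ext1]

@[simp] private lemma ext1_lc (M : Matrix (Fin N) (Fin N) 𝕜) (col : Fin N → 𝕜) (s : 𝕜)
    (j : Fin N) : ext1 M col s (Fin.last N) j.castSucc = 0 := by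
  simp [ext1]

@[simp] private lemma ext1_ll (M : Matrix (Fin N) (Fin N) 𝕜) (col : Fin N → 𝕜) (s : 𝕜) :
    ext1 M col s (Fin.last N) (Fin.last N) = s := by
  simp [ext1]

private lemma det_ut {U : Matrix (Fin N) (Fin N) 𝕜} (hU : ∀ i j : Fin N, j < i → U i j = 0) :
    U.det = ∏ i, U i i :=
  Matrix.det_of_upperTriangular (fun i j h => hU i j h)

private lemma isUnit_of_ut {U : Matrix (Fin N) (Fin N) 𝕜}
    (hU : ∀ i j : Fin N, j < i → U i j = 0) (hd : ∀ i, U i i ≠ 0) : IsUnit U := by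
  rw [Matrix.isUnit_iff_isUnit_det, det_ut hU, isUnit_iff_ne_zero]
  exact Finset.prod_ne_zero_iff.2 fun i _ => hd i

private lemma diag_ne_zero {U : Matrix (Fin N) (Fin N) 𝕜}
    (hU : ∀ i j : Fin N, j < i → U i j = 0) (h : IsUnit U) : ∀ i, U i i ≠ 0 := by
  have hdet : U.det ≠ 0 := (Matrix.isUnit_iff_isUnit_det U |>.1 h).ne_zero
  rw [det_ut hU] at hdet
  intro i
  exact fun h0 => hdet (Finset.prod_eq_zero (Finset.mem_univ i) h0)

private lemma aux (𝕜 : Type*) [Field 𝕜] : ∀ (N : ℕ) (B : Matrix (Fin N) (Fin N) 𝕜),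
    (∀ i j, j ≤ i → B i j = 0) → B * B = 0 →
    ∃ U P : Matrix (Fin N) (Fin N) 𝕜,
      IsUnit U ∧ (∀ i j, j < i → U i j = 0) ∧ (∀ i j, j ≤ i → P i j = 0) ∧
      ((∀ i j, P i j = 0 ∨ P i j = 1) ∧
       (∀ i j₁ j₂, P i j₁ ≠ 0 → P i j₂ ≠ 0 → j₁ = j₂) ∧
       (∀ i₁ i₂ j, P i₁ j ≠ 0 → P i₂ j ≠ 0 → i₁ = i₂)) ∧
      B * U = U * P := by
  intro N
  induction N with
  | zero =>
    intro B _ _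
    exact ⟨1, 0, isUnit_one, fun i => i.elim0, fun i => i.elim0,
      ⟨fun i => i.elim0, fun i => i.elim0, fun i => i.elim0⟩, by ext i; exact i.elim0⟩
  | succ N ih =>
    intro B hB hBB
    classical
    set B' : Matrix (Fin N) (Fin N) 𝕜 := Matrix.of fun i j => B i.castSucc j.castSucc with hB'def
    set b : Fin N → 𝕜 := fun i => B i.castSucc (Fin.last N) with hbdef
    have hrowlast : ∀ k, B (Fin.last N) k = 0 := fun k => hB _ _ (Fin.le_last k)
    have hB'strict : ∀ i j : Fin N, j ≤ i → B' i j = 0 := by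
      intro i j h
      exact hB _ _ (Fin.castSucc_le_castSucc_iff.mpr h)
    have hBBcc : ∀ i j : Fin N, ∑ k : Fin N, B' i k * B' k j = 0 := by
      intro i j
      have h0 : (B * B) i.castSucc j.castSucc = 0 := by rw [hBB]; rfl
      rw [Matrix.mul_apply, Fin.sum_univ_castSucc, hrowlast, mul_zero, add_zero] at h0
      exact h0
    have hB'B' : B' * B' = 0 := by
      ext i j
      rw [Matrix.mul_apply]
      exact hBBcc i j
    have hB'b : B' *ᵥ b = 0 := by
      funext i
      have h0 : (B * B) i.castSucc (Fin.last N) = 0 := by rw [hBB]; rfl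
      rw [Matrix.mul_apply, Fin.sum_univ_castSucc, hrowlast, mul_zero, add_zero] at h0
      simpa [Matrix.mulVec, dotProduct, hB'def, hbdef] using h0
    obtain ⟨U', P', hU', hUt', hPst', hPm', hcomm'⟩ := ih B' hB'strict hB'B'
    have hU'det : IsUnit U'.det := (Matrix.isUnit_iff_isUnit_det U').1 hU'
    have hdiag : ∀ i, U' i i ≠ 0 := diag_ne_zero hUt' hU'
    have hcancel : ∀ v : Fin N → 𝕜, U'⁻¹ *ᵥ (U' *ᵥ v) = v := by
      intro v
      rw [Matrix.mulVec_mulVec, Matrix.nonsing_inv_mul _ hU'det, Matrix.one_mulVec]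
    obtain ⟨c, hU'c⟩ : ∃ c : Fin N → 𝕜, U' *ᵥ c = b :=
      ⟨U'⁻¹ *ᵥ b, by rw [Matrix.mulVec_mulVec, Matrix.mul_nonsing_inv _ hU'det,
        Matrix.one_mulVec]⟩
    have hP'c : P' *ᵥ c = 0 := by
      have h1 : U' *ᵥ (P' *ᵥ c) = 0 := by
        rw [Matrix.mulVec_mulVec, ← hcomm', ← Matrix.mulVec_mulVec, hU'c, hB'b]
      rw [← hcancel (P' *ᵥ c), h1, Matrix.mulVec_zero]
    set pr : Fin N → Prop := fun i => ∃ j, P' i j ≠ 0 with hprdef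
    set d : Fin N → 𝕜 := fun i => if pr i then 0 else c i with hddef
    have hdeath : ∀ i j, P' i j ≠ 0 → c j = 0 := by
      intro i j hij
      have h0 : (P' *ᵥ c) i = 0 := by rw [hP'c]; rfl
      rw [Matrix.mulVec, dotProduct] at h0
      rw [Finset.sum_eq_single j (fun k _ hk => by
        by_cases h : P' i k = 0
        · rw [h, zero_mul]
        · exact absurd (hPm'.2.1 i k j h hij) hk) (fun h => absurd (Finset.mem_univ j) h)] at h0
      exact (mul_eq_zero.mp h0).resolve_left hij
    have hPPt : ∀ i, (P' *ᵥ (P'ᵀ *ᵥ c)) i = c i - d i := by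
      intro i
      by_cases hpi : pr i
      · obtain ⟨j₀, hj₀⟩ := hpi
        have hone : P' i j₀ = 1 := (hPm'.1 i j₀).resolve_left hj₀
        have hinner : (P'ᵀ *ᵥ c) j₀ = c i := by
          rw [Matrix.mulVec, dotProduct]
          rw [Finset.sum_eq_single i (fun k _ hk => by
            by_cases h : P'ᵀ j₀ k = 0
            · rw [h, zero_mul]
            · exact absurd (hPm'.2.2 k i j₀ h hj₀) hk) (fun h => absurd (Finset.mem_univ i) h)]
          rw [Matrix.transpose_apply, hone, one_mul]
        rw [Matrix.mulVec, dotProduct]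
        rw [Finset.sum_eq_single j₀ (fun k _ hk => by
          by_cases h : P' i k = 0
          · rw [h, zero_mul]
          · exact absurd (hPm'.2.1 i k j₀ h hj₀) hk) (fun h => absurd (Finset.mem_univ j₀) h)]
        have hpi' : pr i := ⟨j₀, hj₀⟩
        rw [hinner, hone, one_mul, hddef]
        simp [hpi']
      · have hrow0 : ∀ j, P' i j = 0 := fun j => by_contra fun h => hpi ⟨j, h⟩
        simp [Matrix.mulVec, dotProduct, hrow0, hddef, hpi]
    by_cases hd0 : d = 0
    · -- Case A : the extra column can be killed entirely
      have hPPtc : P' *ᵥ (P'ᵀ *ᵥ c) = c := by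
        funext i
        rw [hPPt i, hd0]
        simp
      set u : Fin N → 𝕜 := -(U' *ᵥ (P'ᵀ *ᵥ c)) with hudef
      have hB'u : B' *ᵥ u = -b := by
        rw [hudef, Matrix.mulVec_neg, Matrix.mulVec_mulVec, hcomm', ← Matrix.mulVec_mulVec,
          hPPtc, hU'c]
      refine ⟨ext1 U' u 1, ext1 P' 0 0, ?_, ?_, ?_, ⟨?_, ?_, ?_⟩, ?_⟩
      · apply isUnit_of_ut
        · intro i j hji
          induction j using Fin.lastCases with
          | last => exact absurd hji (Fin.le_last i).not_gt
          | cast j' =>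
            induction i using Fin.lastCases with
            | last => exact ext1_lc ..
            | cast i' => rw [ext1_cc]; exact hUt' i' j' (Fin.castSucc_lt_castSucc_iff.mp hji)
        · intro i
          induction i using Fin.lastCases with
          | last => rw [ext1_ll]; exact one_ne_zero
          | cast i' => rw [ext1_cc]; exact hdiag i'
      · intro i j hji
        induction j using Fin.lastCases with
        | last => exact absurd hji (Fin.le_last i).not_gt
        | cast j' =>
          induction i using Fin.lastCases with
          | last => exact ext1_lc ..
          | cast i' => rw [ext1_cc]; exact hUt' i' j' (Fin.castSucc_lt_castSucc_iff.mp hji)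
      · intro i j hji
        induction j using Fin.lastCases with
        | last =>
          induction i using Fin.lastCases with
          | last => exact ext1_ll ..
          | cast i' => exact absurd hji (Fin.castSucc_lt_last i').not_ge
        | cast j' =>
          induction i using Fin.lastCases with
          | last => exact ext1_lc ..
          | cast i' => rw [ext1_cc]; exact hPst' i' j' (Fin.castSucc_le_castSucc_iff.mp hji)
      · intro i j
        induction j using Fin.lastCases with
        | last =>
          induction i using Fin.lastCases with
          | last => left; exact ext1_ll ..
          | cast i' => left; rw [ext1_cl]; rfl
        | cast j' =>
          induction i using Fin.lastCases with
          | last => left; exact ext1_lc ..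
          | cast i' => rw [ext1_cc]; exact hPm'.1 i' j'
      · intro i j₁ j₂ h1 h2
        induction i using Fin.lastCases with
        | last =>
          exfalso; apply h1
          induction j₁ using Fin.lastCases with
          | last => exact ext1_ll ..
          | cast j' => exact ext1_lc ..
        | cast i' =>
          induction j₁ using Fin.lastCases with
          | last => exact absurd (ext1_cl ..) h1
          | cast j₁' =>
            induction j₂ using Fin.lastCases with
            | last => exact absurd (ext1_cl ..) h2
            | cast j₂' =>
              rw [ext1_cc] at h1 h2
              exact congrArg Fin.castSucc (hPm'.2.1 i' j₁' j₂' h1 h2)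
      · intro i₁ i₂ j h1 h2
        induction j using Fin.lastCases with
        | last =>
          exfalso; apply h1
          induction i₁ using Fin.lastCases with
          | last => exact ext1_ll ..
          | cast i' => rw [ext1_cl]; rfl
        | cast j' =>
          induction i₁ using Fin.lastCases with
          | last => exact absurd (ext1_lc ..) h1
          | cast i₁' =>
            induction i₂ using Fin.lastCases with
            | last => exact absurd (ext1_lc ..) h2
            | cast i₂' =>
              rw [ext1_cc] at h1 h2
              exact congrArg Fin.castSucc (hPm'.2.2 i₁' i₂' j' h1 h2)
      · ext i j
        rw [Matrix.mul_apply, Matrix.mul_apply, Fin.sum_univ_castSucc, Fin.sum_univ_castSucc]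
        induction j using Fin.lastCases with
        | last =>
          induction i using Fin.lastCases with
          | last => simp [hrowlast]
          | cast i' =>
            have hBu : ∑ k : Fin N, B' i' k * u k = -b i' := by
              have := congrFun hB'u i'
              simpa [Matrix.mulVec, dotProduct] using this
            simp only [ext1_cl, ext1_ll, ext1_cc, ext1_lc, Pi.zero_apply, mul_zero, mul_one,
              Finset.sum_const_zero, zero_add, add_zero]
            have : ∀ k : Fin N, B i'.castSucc k.castSucc * u k = B' i' k * u k := by
              intro k; rw [hB'def]; rfl
            rw [Finset.sum_congr rfl (fun k _ => this k), hBu]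
            exact neg_add_cancel (b i')
        | cast j' =>
          induction i using Fin.lastCases with
          | last => simp [hrowlast]
          | cast i' =>
            have hcm : ∑ k : Fin N, B' i' k * U' k j' = ∑ k : Fin N, U' i' k * P' k j' := by
              have := congrFun (congrFun hcomm' i') j'
              rwa [Matrix.mul_apply, Matrix.mul_apply] at this
            simp only [ext1_cc, ext1_cl, ext1_ll, ext1_lc, hrowlast, Pi.zero_apply, mul_zero,
              zero_mul, mul_one, add_zero]
            have : ∀ k : Fin N, B i'.castSucc k.castSucc * U' k j' = B' i' k * U' k j' := by
              intro k; rw [hB'def]; rfl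
            rw [Finset.sum_congr rfl (fun k _ => this k), hcm]
    · -- Case B : a genuine new matched pair appears
      have hne : (Finset.univ.filter fun i => d i ≠ 0).Nonempty := by
        obtain ⟨i, hi⟩ := Function.ne_iff.1 hd0
        exact ⟨i, Finset.mem_filter.2 ⟨Finset.mem_univ i, hi⟩⟩
      set istar : Fin N := (Finset.univ.filter fun i => d i ≠ 0).max' hne with histar
      have hdi : d istar ≠ 0 :=
        (Finset.mem_filter.1 ((Finset.univ.filter fun i => d i ≠ 0).max'_mem hne)).2
      have hdsupp : ∀ k, istar < k → d k = 0 := by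
        intro k hk
        by_contra h
        exact absurd (Finset.le_max' _ k (Finset.mem_filter.2 ⟨Finset.mem_univ k, h⟩)) hk.not_ge
      have hnpr : ¬ pr istar := by
        intro h
        apply hdi
        rw [hddef]
        simp [h]
      have hci : c istar = d istar := by
        rw [hddef]
        simp [hnpr]
      have hrow0 : ∀ j, P' istar j = 0 := fun j => by_contra fun h => hnpr ⟨j, h⟩
      have hcol0 : ∀ i₀, P' i₀ istar = 0 := by
        intro i₀
        by_contra h
        exact hdi (hci ▸ hdeath i₀ istar h)
      set γ : 𝕜 := d istar with hγ
      have hPPtc : P' *ᵥ (P'ᵀ *ᵥ c) = c - d := funext hPPt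
      set u : Fin N → 𝕜 := U' *ᵥ (-(γ⁻¹ • (P'ᵀ *ᵥ c))) with hudef
      set t : Fin N → 𝕜 := U' *ᵥ (γ⁻¹ • d) with htdef
      have ht2 : B' *ᵥ u + γ⁻¹ • b = t := by
        have h1 : B' *ᵥ u = -(γ⁻¹ • (U' *ᵥ (c - d))) := by
          rw [hudef, Matrix.mulVec_mulVec, hcomm', ← Matrix.mulVec_mulVec,
            Matrix.mulVec_neg, Matrix.mulVec_smul, hPPtc, Matrix.mulVec_neg,
            Matrix.mulVec_smul]
        rw [h1, htdef, Matrix.mulVec_sub, hU'c, Matrix.mulVec_smul]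
        funext i
        simp only [Pi.add_apply, Pi.neg_apply, Pi.smul_apply, Pi.sub_apply, smul_eq_mul]
        ring
      have hB't : B' *ᵥ t = 0 := by
        rw [← ht2, Matrix.mulVec_add, Matrix.mulVec_smul, hB'b, smul_zero, add_zero,
          Matrix.mulVec_mulVec, hB'B', Matrix.zero_mulVec]
      have htk : ∀ k, t k = ∑ m, U' k m * (γ⁻¹ * d m) := by
        intro k
        rw [htdef]
        simp [Matrix.mulVec, dotProduct, smul_eq_mul]
      have ht_supp : ∀ k, istar < k → t k = 0 := by
        intro k hk
        rw [htk]
        refine Finset.sum_eq_zero fun m _ => ?_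
        rcases lt_or_ge m k with h | h
        · rw [hUt' k m h, zero_mul]
        · rw [hdsupp m (lt_of_lt_of_le hk h), mul_zero, mul_zero]
      have ht_diag : t istar = U' istar istar := by
        rw [htk]
        rw [Finset.sum_eq_single istar (fun m _ hm => ?_)
          (fun h => absurd (Finset.mem_univ istar) h)]
        · rw [inv_mul_cancel₀ hdi, mul_one]
        · rcases lt_or_ge m istar with h | h
          · rw [hUt' istar m h, zero_mul]
          · rw [hdsupp m (lt_of_le_of_ne h (Ne.symm hm)), mul_zero, mul_zero]
      set Utop : Matrix (Fin N) (Fin N) 𝕜 :=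
        Matrix.of (fun i j => if j = istar then t i else U' i j) with hUtopdef
      have hUtop_app : ∀ i j, Utop i j = if j = istar then t i else U' i j := fun i j => rfl
      set p : Fin N → 𝕜 := fun i => if i = istar then (1 : 𝕜) else 0 with hpdef
      have hp_app : ∀ i, p i = if i = istar then (1 : 𝕜) else 0 := fun i => rfl
      have hUtop_ut : ∀ i j : Fin N, j < i → Utop i j = 0 := by
        intro i j hji
        rw [hUtop_app]
        by_cases hj : j = istar
        · rw [if_pos hj]
          exact ht_supp i (hj ▸ hji)
        · rw [if_neg hj]
          exact hUt' i j hji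
      have hUT : ∀ i j : Fin (N + 1), j < i → ext1 Utop u γ⁻¹ i j = 0 := by
        intro i j hji
        induction j using Fin.lastCases with
        | last => exact absurd hji (Fin.le_last i).not_gt
        | cast j' =>
          induction i using Fin.lastCases with
          | last => exact ext1_lc ..
          | cast i' =>
            rw [ext1_cc]
            exact hUtop_ut i' j' (Fin.castSucc_lt_castSucc_iff.mp hji)
      refine ⟨ext1 Utop u γ⁻¹, ext1 P' p 0, ?_, hUT, ?_, ⟨?_, ?_, ?_⟩, ?_⟩
      · apply isUnit_of_ut hUT
        intro i
        induction i using Fin.lastCases with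
        | last =>
          rw [ext1_ll]
          exact inv_ne_zero hdi
        | cast i' =>
          rw [ext1_cc, hUtop_app]
          by_cases hi : i' = istar
          · rw [if_pos hi, hi, ht_diag]
            exact hdiag istar
          · rw [if_neg hi]
            exact hdiag i'
      · intro i j hji
        induction j using Fin.lastCases with
        | last =>
          induction i using Fin.lastCases with
          | last => exact ext1_ll ..
          | cast i' => exact absurd hji (Fin.castSucc_lt_last i').not_ge
        | cast j' =>
          induction i using Fin.lastCases with
          | last => exact ext1_lc ..
          | cast i' =>
            rw [ext1_cc]
            exact hPst' i' j' (Fin.castSucc_le_castSucc_iff.mp hji)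
      · intro i j
        induction j using Fin.lastCases with
        | last =>
          induction i using Fin.lastCases with
          | last => left; exact ext1_ll ..
          | cast i' =>
            rw [ext1_cl, hp_app]
            by_cases hi : i' = istar
            · right; rw [if_pos hi]
            · left; rw [if_neg hi]
        | cast j' =>
          induction i using Fin.lastCases with
          | last => left; exact ext1_lc ..
          | cast i' =>
            rw [ext1_cc]
            exact hPm'.1 i' j'
      · intro i j₁ j₂ h1 h2
        induction i using Fin.lastCases with
        | last =>
          exfalso; apply h1
          induction j₁ using Fin.lastCases with
          | last => exact ext1_ll ..
          | cast j' => exact ext1_lc ..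
        | cast i' =>
          induction j₁ using Fin.lastCases with
          | last =>
            induction j₂ using Fin.lastCases with
            | last => rfl
            | cast j₂' =>
              exfalso
              rw [ext1_cl, hp_app] at h1
              rw [ext1_cc] at h2
              by_cases hi : i' = istar
              · exact hnpr ⟨j₂', hi ▸ h2⟩
              · exact h1 (if_neg hi)
          | cast j₁' =>
            induction j₂ using Fin.lastCases with
            | last =>
              exfalso
              rw [ext1_cl, hp_app] at h2
              rw [ext1_cc] at h1
              by_cases hi : i' = istar
              · exact hnpr ⟨j₁', hi ▸ h1⟩
              · exact h2 (if_neg hi)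
            | cast j₂' =>
              rw [ext1_cc] at h1 h2
              exact congrArg Fin.castSucc (hPm'.2.1 i' j₁' j₂' h1 h2)
      · intro i₁ i₂ j h1 h2
        induction j using Fin.lastCases with
        | last =>
          have key : ∀ i : Fin (N + 1), ext1 P' p 0 i (Fin.last N) ≠ 0 → i = istar.castSucc := by
            intro i hi
            induction i using Fin.lastCases with
            | last => exact absurd (ext1_ll ..) hi
            | cast i' =>
              rw [ext1_cl, hp_app] at hi
              by_cases h : i' = istar
              · rw [h]
              · exact absurd (if_neg h) hi
          rw [key i₁ h1, key i₂ h2]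
        | cast j' =>
          induction i₁ using Fin.lastCases with
          | last => exact absurd (ext1_lc ..) h1
          | cast i₁' =>
            induction i₂ using Fin.lastCases with
            | last => exact absurd (ext1_lc ..) h2
            | cast i₂' =>
              rw [ext1_cc] at h1 h2
              exact congrArg Fin.castSucc (hPm'.2.2 i₁' i₂' j' h1 h2)
      · ext i j
        rw [Matrix.mul_apply, Matrix.mul_apply, Fin.sum_univ_castSucc, Fin.sum_univ_castSucc]
        induction j using Fin.lastCases with
        | last =>
          induction i using Fin.lastCases with
          | last => simp [hrowlast]
          | cast i' =>
            simp only [ext1_cl, ext1_ll, ext1_cc, ext1_lc, hrowlast, mul_zero, zero_mul,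
              add_zero, Finset.sum_const_zero, zero_add]
            have hLHS : ∀ k : Fin N, B i'.castSucc k.castSucc * u k = B' i' k * u k := by
              intro k; rw [hB'def]; rfl
            rw [Finset.sum_congr rfl (fun k _ => hLHS k)]
            have hBu : ∑ k : Fin N, B' i' k * u k = (B' *ᵥ u) i' := by
              rw [Matrix.mulVec, dotProduct]
            have hteq : (B' *ᵥ u) i' + γ⁻¹ * b i' = t i' := by
              have := congrFun ht2 i'
              simpa [smul_eq_mul] using this
            have hRHS : ∑ k : Fin N, Utop i' k * p k = t i' := by
              rw [Finset.sum_eq_single istar (fun m _ hm => ?_)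
                (fun h => absurd (Finset.mem_univ istar) h)]
              · rw [hp_app, if_pos rfl, mul_one, hUtop_app, if_pos rfl]
              · rw [hp_app, if_neg hm, mul_zero]
            rw [hBu, hRHS]
            rw [← hteq, hbdef]
            ring
        | cast j' =>
          induction i using Fin.lastCases with
          | last => simp [hrowlast]
          | cast i' =>
            simp only [ext1_cc, ext1_cl, ext1_ll, ext1_lc, hrowlast, Pi.zero_apply, mul_zero,
              zero_mul, add_zero]
            have hLHS : ∀ k : Fin N, B i'.castSucc k.castSucc * Utop k j' = B' i' k * Utop k j' := by
              intro k; rw [hB'def]; rfl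
            rw [Finset.sum_congr rfl (fun k _ => hLHS k)]
            have hRHS : ∑ k : Fin N, Utop i' k * P' k j' = ∑ k : Fin N, U' i' k * P' k j' := by
              refine Finset.sum_congr rfl fun k _ => ?_
              by_cases hk : k = istar
              · rw [hk, hrow0 j', mul_zero, mul_zero]
              · rw [hUtop_app, if_neg hk]
            rw [hRHS]
            by_cases hj : j' = istar
            · have hL : ∑ k : Fin N, B' i' k * Utop k j' = (B' *ᵥ t) i' := by
                rw [Matrix.mulVec, dotProduct]
                refine Finset.sum_congr rfl fun k _ => ?_
                rw [hUtop_app, if_pos hj]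
              rw [hL, hB't]
              rw [Finset.sum_eq_zero fun k _ => by rw [hj, hcol0 k, mul_zero]]
              rfl
            · have hL : ∑ k : Fin N, B' i' k * Utop k j' = ∑ k : Fin N, B' i' k * U' k j' := by
                refine Finset.sum_congr rfl fun k _ => ?_
                rw [hUtop_app, if_neg hj]
              rw [hL]
              have := congrFun (congrFun hcomm' i') j'
              rwa [Matrix.mul_apply, Matrix.mul_apply] at this

end Helpers

/-- (Existence part of the structure theorem for persistent homology,
in matrix form.)  For any strictly upper triangular `B` over a field `𝕜` with
`B * B = 0` there is an invertible upper triangular matrix `U` such that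
`U⁻¹ * B * U` is strictly upper triangular and in partial-matching form. -/
theorem exists_partial_matching_form {𝕜 : Type*} [Field 𝕜] {N : ℕ}
    (B : Matrix (Fin N) (Fin N) 𝕜)
    (hB : IsStrictlyUpperTriangular B) (hBB : B * B = 0) :
    ∃ U : Matrix (Fin N) (Fin N) 𝕜, IsUnit U ∧ IsUpperTriangularMat U ∧
      IsStrictlyUpperTriangular (U⁻¹ * B * U) ∧ IsPartialMatching (U⁻¹ * B * U) := by
  obtain ⟨U, P, hU, hUt, hPst, hPm, hcomm⟩ := aux 𝕜 N B hB hBB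
  have hP : U⁻¹ * B * U = P := by
    rw [mul_assoc, hcomm, ← mul_assoc,
      Matrix.nonsing_inv_mul _ ((Matrix.isUnit_iff_isUnit_det U).1 hU), one_mul]
  exact ⟨U, hU, hUt, by rw [hP]; exact hPst, by rw [hP]; exact hPm⟩
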